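/- Let V be a multiplicative unitary of multiplicity 1 on a finite-dimensional Hilbert space H, and let f, g be pre-subgroups. The following are equivalent: (i) V(f⊗g) = f⊗g; (ii) H^g ⊆ H^f; (iii) H_f ⊆ H_g. Moreover, the relation g ≺ f defined by these conditions is a partial order on the set of pre-subgroups, with greatest element e and least element ê. -/

import Mathlib

open scoped InnerProductSpace ComplexOrder

noncomputable section

namespace MU

variable {ι : Type*} [Fintype ι] [DecidableEq ι]

/-- The elementary tensor `f ⊗ g` of two vectors, in the model
`H ⊗ H = EuclideanSpace ℂ (ι × ι)`. -/
def tens (f g : EuclideanSpace ℂ ι) : EuclideanSpace ℂ (ι × ι) :=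
  WithLp.toLp 2 (fun p => f p.1 * g p.2)

/-- `g ↦ f ⊗ g` as a linear map. -/
def tensL (f : EuclideanSpace ℂ ι) :
    EuclideanSpace ℂ ι →ₗ[ℂ] EuclideanSpace ℂ (ι × ι) where
  toFun g := tens f g
  map_add' x y := WithLp.ofLp_injective 2 <| funext fun p => by
    show f p.1 * (x + y) p.2 = f p.1 * x p.2 + f p.1 * y p.2
    rw [PiLp.add_apply]; ring
  map_smul' c x := WithLp.ofLp_injective 2 <| funext fun p => by
    show f p.1 * (c • x) p.2 = (c • (tens f x : EuclideanSpace ℂ (ι × ι))) p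
    rw [PiLp.smul_apply, PiLp.smul_apply, smul_eq_mul, smul_eq_mul]
    show f p.1 * (c * x p.2) = c * (f p.1 * x p.2)
    ring

/-- `f ↦ f ⊗ g` as a linear map. -/
def tensR (g : EuclideanSpace ℂ ι) :
    EuclideanSpace ℂ ι →ₗ[ℂ] EuclideanSpace ℂ (ι × ι) where
  toFun f := tens f g
  map_add' x y := WithLp.ofLp_injective 2 <| funext fun p => by
    show (x + y) p.1 * g p.2 = x p.1 * g p.2 + y p.1 * g p.2
    rw [PiLp.add_apply]; ring
  map_smul' c x := WithLp.ofLp_injective 2 <| funext fun p => by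
    show (c • x) p.1 * g p.2 = (c • (tens x g : EuclideanSpace ℂ (ι × ι))) p
    rw [PiLp.smul_apply, PiLp.smul_apply, smul_eq_mul, smul_eq_mul]
    show (c * x p.1) * g p.2 = c * (x p.1 * g p.2)
    ring

/-- Action of a matrix on a Euclidean space vector. -/
def appM {κ : Type*} [Fintype κ] (M : Matrix κ κ ℂ) (v : EuclideanSpace ℂ κ) :
    EuclideanSpace ℂ κ :=
  WithLp.toLp 2 (fun i => ∑ j, M i j * v j)

/-- Action of a matrix as a linear map on the Euclidean space. -/
def mact {κ : Type*} [Fintype κ] (M : Matrix κ κ ℂ) :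
    EuclideanSpace ℂ κ →ₗ[ℂ] EuclideanSpace ℂ κ where
  toFun := appM M
  map_add' x y := WithLp.ofLp_injective 2 <| funext fun i => by
    show ∑ j, M i j * (x + y) j = (appM M x + appM M y) i
    rw [PiLp.add_apply]
    show ∑ j, M i j * (x + y) j = (∑ j, M i j * x j) + ∑ j, M i j * y j
    rw [← Finset.sum_add_distrib]
    refine Finset.sum_congr rfl fun j _ => ?_
    rw [PiLp.add_apply]; ring
  map_smul' c x := WithLp.ofLp_injective 2 <| funext fun i => by
    show ∑ j, M i j * (c • x) j = (c • appM M x) i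
    rw [PiLp.smul_apply, smul_eq_mul]
    show ∑ j, M i j * (c • x) j = c * ∑ j, M i j * x j
    rw [Finset.mul_sum]
    refine Finset.sum_congr rfl fun j _ => ?_
    rw [PiLp.smul_apply, smul_eq_mul]; ring

/-- The leg `V₁₂` on `H ⊗ H ⊗ H`. -/
def leg12 (V : Matrix (ι × ι) (ι × ι) ℂ) : Matrix (ι × ι × ι) (ι × ι × ι) ℂ :=
  fun p q => V (p.1, p.2.1) (q.1, q.2.1) * (if p.2.2 = q.2.2 then 1 else 0)

/-- The leg `V₁₃` on `H ⊗ H ⊗ H`. -/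
def leg13 (V : Matrix (ι × ι) (ι × ι) ℂ) : Matrix (ι × ι × ι) (ι × ι × ι) ℂ :=
  fun p q => V (p.1, p.2.2) (q.1, q.2.2) * (if p.2.1 = q.2.1 then 1 else 0)

/-- The leg `V₂₃` on `H ⊗ H ⊗ H`. -/
def leg23 (V : Matrix (ι × ι) (ι × ι) ℂ) : Matrix (ι × ι × ι) (ι × ι × ι) ℂ :=
  fun p q => V (p.2.1, p.2.2) (q.2.1, q.2.2) * (if p.1 = q.1 then 1 else 0)

/-- The pentagon equation `V₁₂ V₁₃ V₂₃ = V₂₃ V₁₂`. -/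
def Pentagon (V : Matrix (ι × ι) (ι × ι) ℂ) : Prop :=
  leg12 V * leg13 V * leg23 V = leg23 V * leg12 V

/-- `V` is a multiplicative unitary: a unitary satisfying the pentagon equation. -/
def IsMU (V : Matrix (ι × ι) (ι × ι) ℂ) : Prop :=
  V * V.conjTranspose = 1 ∧ V.conjTranspose * V = 1 ∧ Pentagon V

/-- `ξ` is a fixed vector for `V`. -/
def Fixed (V : Matrix (ι × ι) (ι × ι) ℂ) (ξ : EuclideanSpace ℂ ι) : Prop :=
  ∀ η, mact V (tens ξ η) = tens ξ η

/-- `ξ` is a cofixed vector for `V`. -/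
def Cofixed (V : Matrix (ι × ι) (ι × ι) ℂ) (ξ : EuclideanSpace ℂ ι) : Prop :=
  ∀ η, mact V (tens η ξ) = tens η ξ

/-- `V` has multiplicity 1, with fixed unit vector `e` and cofixed unit vector `eHat`. -/
def Mult1 (V : Matrix (ι × ι) (ι × ι) ℂ) (e eHat : EuclideanSpace ℂ ι) : Prop :=
  ‖e‖ = 1 ∧ ‖eHat‖ = 1 ∧ Fixed V e ∧ Cofixed V eHat ∧
    (∀ ξ, Fixed V ξ → ∃ c : ℂ, ξ = c • e) ∧
    (∀ ξ, Cofixed V ξ → ∃ c : ℂ, ξ = c • eHat)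

/-- A pre-subgroup of `V` (with fixed vector `e`): a unit vector `f` with
`⟨f,e⟩ > 0` and `V(f⊗f) = f⊗f`. -/
def IsPreSubgroup (V : Matrix (ι × ι) (ι × ι) ℂ) (e f : EuclideanSpace ℂ ι) : Prop :=
  ‖f‖ = 1 ∧ 0 < ⟪f, e⟫_ℂ ∧ mact V (tens f f) = tens f f

/-- The subspace `H^f = {η : V(f⊗η) = f⊗η}`. -/
def subUp (V : Matrix (ι × ι) (ι × ι) ℂ) (f : EuclideanSpace ℂ ι) :
    Submodule ℂ (EuclideanSpace ℂ ι) :=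
  LinearMap.ker ((mact V).comp (tensL f) - tensL f)

/-- The subspace `H_f = {η : V(η⊗f) = η⊗f}`. -/
def subDown (V : Matrix (ι × ι) (ι × ι) ℂ) (f : EuclideanSpace ℂ ι) :
    Submodule ℂ (EuclideanSpace ℂ ι) :=
  LinearMap.ker ((mact V).comp (tensR f) - tensR f)

/-- The slice `L(ω_{ξ,η}) = (ω_{ξ,η} ⊗ id)(V)`. -/
def Lslice (V : Matrix (ι × ι) (ι × ι) ℂ) (ξ η : EuclideanSpace ℂ ι) : Matrix ι ι ℂ :=
  fun a b => ∑ x, ∑ y, (starRingEnd ℂ) (ξ x) * η y * V (x, a) (y, b)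

/-- The slice `ρ(ω_{ξ,η}) = (id ⊗ ω_{ξ,η})(V)`. -/
def Rslice (V : Matrix (ι × ι) (ι × ι) ℂ) (ξ η : EuclideanSpace ℂ ι) : Matrix ι ι ℂ :=
  fun a b => ∑ x, ∑ y, (starRingEnd ℂ) (ξ x) * η y * V (a, x) (b, y)

/-- The slice `L(ω) = (ω ⊗ id)(V)` of a general linear functional `ω` on `L(H)`. -/
def LslF (V : Matrix (ι × ι) (ι × ι) ℂ) (ω : Matrix ι ι ℂ →ₗ[ℂ] ℂ) : Matrix ι ι ℂ :=
  fun a b => ω (fun x y => V (x, a) (y, b))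

/-- A state on `L(H)`: a unital positive linear functional. -/
def IsState (ω : Matrix ι ι ℂ →ₗ[ℂ] ℂ) : Prop :=
  ω 1 = 1 ∧ ∀ M : Matrix ι ι ℂ, M.PosSemidef → ∃ r : ℝ, 0 ≤ r ∧ ω M = r


set_option linter.unusedSectionVars false
section Aux
variable {ι : Type*} [Fintype ι] [DecidableEq ι]
variable {κ : Type*} [Fintype κ] [DecidableEq κ]

lemma inner_eud (x y : EuclideanSpace ℂ κ) :
    ⟪x, y⟫_ℂ = ∑ i, (starRingEnd ℂ) (x i) * y i := by
  simp [PiLp.inner_apply, RCLike.inner_apply, mul_comm]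

lemma mact_apply (M : Matrix κ κ ℂ) (v : EuclideanSpace ℂ κ) (i : κ) :
    mact M v i = ∑ j, M i j * v j := rfl

lemma tens_apply (a b : EuclideanSpace ℂ ι) (p : ι × ι) :
    tens a b p = a p.1 * b p.2 := rfl

lemma mact_mul (M N : Matrix κ κ ℂ) (v : EuclideanSpace ℂ κ) :
    mact (M * N) v = mact M (mact N v) := by
  ext i
  simp only [mact_apply, Matrix.mul_apply, Finset.sum_mul, Finset.mul_sum]
  rw [Finset.sum_comm]
  exact Finset.sum_congr rfl fun j _ => Finset.sum_congr rfl fun k _ => by ring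

lemma mact_one (v : EuclideanSpace ℂ κ) : mact (1 : Matrix κ κ ℂ) v = v := by
  ext i
  simp [mact_apply, Matrix.one_apply, Finset.sum_ite_eq]

lemma inner_mact (A : Matrix κ κ ℂ) (x y : EuclideanSpace ℂ κ) :
    ⟪x, mact A y⟫_ℂ = ⟪mact A.conjTranspose x, y⟫_ℂ := by
  simp only [inner_eud, mact_apply, Matrix.conjTranspose_apply, Finset.mul_sum, map_sum, map_mul,
    Finset.sum_mul]
  rw [Finset.sum_comm]
  exact Finset.sum_congr rfl fun j _ => Finset.sum_congr rfl fun k _ => by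
    rw [Complex.star_def, Complex.conj_conj]; ring

lemma mact_fix_conjTranspose {V : Matrix κ κ ℂ} (hU : V.conjTranspose * V = 1)
    {v : EuclideanSpace ℂ κ} (hv : mact V v = v) : mact V.conjTranspose v = v := by
  conv_lhs => rw [← hv]
  rw [← mact_mul, hU, mact_one]

lemma inner_mact_mact {V : Matrix κ κ ℂ} (hU : V.conjTranspose * V = 1)
    (x y : EuclideanSpace ℂ κ) : ⟪mact V x, mact V y⟫_ℂ = ⟪x, y⟫_ℂ := by
  rw [inner_mact, ← mact_mul, hU, mact_one]

lemma inner_tens (a b c d : EuclideanSpace ℂ ι) :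
    ⟪tens a b, tens c d⟫_ℂ = ⟪a, c⟫_ℂ * ⟪b, d⟫_ℂ := by
  simp only [inner_eud, tens_apply, Finset.sum_mul, Finset.mul_sum, map_mul]
  rw [Fintype.sum_prod_type, Finset.sum_comm]
  exact Finset.sum_congr rfl fun x _ => Finset.sum_congr rfl fun y _ => by ring

lemma inner_self_one {v : EuclideanSpace ℂ κ} (hv : ‖v‖ = 1) : ⟪v, v⟫_ℂ = 1 := by
  rw [inner_self_eq_norm_sq_to_K, hv]; norm_num

lemma norm_of_inner_eq {κ' : Type*} [Fintype κ'] {x : EuclideanSpace ℂ κ}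
    {y : EuclideanSpace ℂ κ'} (h : ⟪x, x⟫_ℂ = ⟪y, y⟫_ℂ) : ‖x‖ = ‖y‖ := by
  have := h
  rw [inner_self_eq_norm_sq_to_K, inner_self_eq_norm_sq_to_K] at this
  have h2 : (‖x‖ : ℝ) ^ 2 = ‖y‖ ^ 2 := by exact_mod_cast this
  nlinarith [norm_nonneg x, norm_nonneg y]

end Aux
section Legs
variable {ι : Type*} [Fintype ι] [DecidableEq ι]

lemma leg12_mul (A B : Matrix (ι × ι) (ι × ι) ℂ) :
    leg12 A * leg12 B = leg12 (A * B) := by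
  apply Matrix.ext; intro p q
  rw [Matrix.mul_apply]
  simp only [leg12, Matrix.mul_apply, Fintype.sum_prod_type, mul_ite, ite_mul, mul_one, one_mul,
    mul_zero, zero_mul, Finset.sum_ite_eq, Finset.sum_ite_eq', Finset.mem_univ, if_true,
    Finset.sum_mul, Finset.mul_sum]
  rcases p with ⟨p1, p2, p3⟩; rcases q with ⟨q1, q2, q3⟩
  by_cases h : p3 = q3 <;> simp [h]

lemma leg23_mul (A B : Matrix (ι × ι) (ι × ι) ℂ) :
    leg23 A * leg23 B = leg23 (A * B) := by
  apply Matrix.ext; intro p q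
  rw [Matrix.mul_apply]
  simp only [leg23, Matrix.mul_apply, Fintype.sum_prod_type, mul_ite, ite_mul, mul_one, one_mul,
    mul_zero, zero_mul, Finset.sum_ite_eq, Finset.sum_ite_eq', Finset.mem_univ, if_true,
    Finset.sum_mul, Finset.mul_sum]
  rcases p with ⟨p1, p2, p3⟩; rcases q with ⟨q1, q2, q3⟩
  by_cases h : p1 = q1 <;> simp [h]

lemma leg12_one : leg12 (1 : Matrix (ι × ι) (ι × ι) ℂ) = 1 := by
  apply Matrix.ext; intro p q
  rcases p with ⟨p1, p2, p3⟩; rcases q with ⟨q1, q2, q3⟩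
  simp only [leg12, Matrix.one_apply, Prod.mk.injEq, Prod.ext_iff]
  by_cases h1 : p1 = q1 <;> by_cases h2 : p2 = q2 <;> by_cases h3 : p3 = q3 <;>
    simp [h1, h2, h3]

lemma leg23_one : leg23 (1 : Matrix (ι × ι) (ι × ι) ℂ) = 1 := by
  apply Matrix.ext; intro p q
  rcases p with ⟨p1, p2, p3⟩; rcases q with ⟨q1, q2, q3⟩
  simp only [leg23, Matrix.one_apply, Prod.mk.injEq, Prod.ext_iff]
  by_cases h1 : p1 = q1 <;> by_cases h2 : p2 = q2 <;> by_cases h3 : p3 = q3 <;>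
    simp [h1, h2, h3]

lemma pent1 {V : Matrix (ι × ι) (ι × ι) ℂ} (hV : IsMU V) :
    leg13 V * leg23 V = leg12 V.conjTranspose * (leg23 V * leg12 V) := by
  have hP := hV.2.2
  unfold Pentagon at hP
  calc leg13 V * leg23 V
      = (leg12 V.conjTranspose * leg12 V) * (leg13 V * leg23 V) := by
        rw [leg12_mul, hV.2.1, leg12_one, one_mul]
    _ = leg12 V.conjTranspose * (leg12 V * leg13 V * leg23 V) := by
        simp only [mul_assoc]
    _ = leg12 V.conjTranspose * (leg23 V * leg12 V) := by rw [hP]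

lemma pent2 {V : Matrix (ι × ι) (ι × ι) ℂ} (hV : IsMU V) :
    leg12 V * leg13 V = leg23 V * leg12 V * leg23 V.conjTranspose := by
  have hP := hV.2.2
  unfold Pentagon at hP
  calc leg12 V * leg13 V
      = (leg12 V * leg13 V * leg23 V) * leg23 V.conjTranspose := by
        rw [mul_assoc (leg12 V * leg13 V), leg23_mul, hV.1, leg23_one, mul_one]
    _ = leg23 V * leg12 V * leg23 V.conjTranspose := by rw [hP]

end Legs
section Entries
variable {ι : Type*} [Fintype ι] [DecidableEq ι]

lemma entry0 (B C : Matrix (ι × ι) (ι × ι) ℂ) (p q : ι × ι × ι) :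
    (leg23 B * leg12 C) p q
      = ∑ m, B (p.2.1, p.2.2) (m, q.2.2) * C (p.1, m) (q.1, q.2.1) := by
  rw [Matrix.mul_apply]
  simp only [leg23, leg12, Fintype.sum_prod_type, mul_ite, ite_mul, mul_one, one_mul,
    mul_zero, zero_mul]
  simp only [Finset.sum_ite_irrel, Finset.sum_const_zero, Finset.sum_ite_eq, Finset.sum_ite_eq', Finset.mem_univ, if_true]

lemma entry1 (A B : Matrix (ι × ι) (ι × ι) ℂ) (p q : ι × ι × ι) :
    (leg13 A * leg23 B) p q
      = ∑ m, A (p.1, p.2.2) (q.1, m) * B (p.2.1, m) (q.2.1, q.2.2) := by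
  rw [Matrix.mul_apply]
  simp only [leg13, leg23, Fintype.sum_prod_type, mul_ite, ite_mul, mul_one, one_mul,
    mul_zero, zero_mul]
  simp only [Finset.sum_ite_irrel, Finset.sum_const_zero, Finset.sum_ite_eq, Finset.sum_ite_eq', Finset.mem_univ, if_true]

lemma entry2 (A B C : Matrix (ι × ι) (ι × ι) ℂ) (p q : ι × ι × ι) :
    (leg12 A * (leg23 B * leg12 C)) p q
      = ∑ r1, ∑ r2, ∑ m, A (p.1, p.2.1) (r1, r2) *
        (B (r2, p.2.2) (m, q.2.2) * C (r1, m) (q.1, q.2.1)) := by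
  rw [Matrix.mul_apply]
  simp only [entry0, leg12, Fintype.sum_prod_type, mul_ite, ite_mul, mul_one, one_mul,
    mul_zero, zero_mul, Finset.mul_sum]
  simp only [Finset.sum_ite_irrel, Finset.sum_const_zero, Finset.sum_ite_eq, Finset.sum_ite_eq', Finset.mem_univ, if_true]

lemma entry3 (A B : Matrix (ι × ι) (ι × ι) ℂ) (p q : ι × ι × ι) :
    (leg12 A * leg13 B) p q
      = ∑ m, A (p.1, p.2.1) (m, q.2.1) * B (m, p.2.2) (q.1, q.2.2) := by
  rw [Matrix.mul_apply]
  simp only [leg12, leg13, Fintype.sum_prod_type, mul_ite, ite_mul, mul_one, one_mul,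
    mul_zero, zero_mul]
  simp only [Finset.sum_ite_irrel, Finset.sum_const_zero, Finset.sum_ite_eq, Finset.sum_ite_eq', Finset.mem_univ, if_true]

lemma entry0b (B C : Matrix (ι × ι) (ι × ι) ℂ) (p q : ι × ι × ι) :
    (leg12 B * leg23 C) p q
      = ∑ m, B (p.1, p.2.1) (q.1, m) * C (m, p.2.2) (q.2.1, q.2.2) := by
  rw [Matrix.mul_apply]
  simp only [leg12, leg23, Fintype.sum_prod_type, mul_ite, ite_mul, mul_one, one_mul,
    mul_zero, zero_mul]
  simp only [Finset.sum_ite_irrel, Finset.sum_const_zero, Finset.sum_ite_eq, Finset.sum_ite_eq', Finset.mem_univ, if_true]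

lemma entry4 (A B C : Matrix (ι × ι) (ι × ι) ℂ) (p q : ι × ι × ι) :
    (leg23 A * leg12 B * leg23 C) p q
      = ∑ r2, ∑ r3, ∑ m, A (p.2.1, p.2.2) (r2, r3) *
        (B (p.1, r2) (q.1, m) * C (m, r3) (q.2.1, q.2.2)) := by
  rw [mul_assoc, Matrix.mul_apply]
  simp only [entry0b, leg23, Finset.mul_sum, Fintype.sum_prod_type, mul_ite, ite_mul, mul_one, one_mul,
    mul_zero, zero_mul, Finset.mul_sum]
  simp only [Finset.sum_ite_irrel, Finset.sum_const_zero, Finset.sum_ite_eq, Finset.sum_ite_eq', Finset.mem_univ, if_true]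

end Entries
section Core
variable {ι : Type*} [Fintype ι] [DecidableEq ι]

def tens3 (a b c : EuclideanSpace ℂ ι) : EuclideanSpace ℂ (ι × ι × ι) :=
  WithLp.toLp 2 (fun p => a p.1 * b p.2.1 * c p.2.2)

lemma mact_leg12_tens3 {V : Matrix (ι × ι) (ι × ι) ℂ} {a b a' b' : EuclideanSpace ℂ ι}
    (h : mact V (tens a b) = tens a' b') (c : EuclideanSpace ℂ ι) :
    mact (leg12 V) (tens3 a b c) = tens3 a' b' c := by
  ext p
  have h1 : (∑ j : ι × ι, V (p.1, p.2.1) j * tens a b j) = a' p.1 * b' p.2.1 :=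
    congrFun (congrArg WithLp.ofLp h) (p.1, p.2.1)
  show (∑ q : ι × ι × ι, leg12 V p q * tens3 a b c q) = a' p.1 * b' p.2.1 * c p.2.2
  rw [← h1, Finset.sum_mul, Fintype.sum_prod_type]
  simp only [leg12, tens3, tens_apply, Fintype.sum_prod_type, mul_ite, ite_mul, mul_one, one_mul,
    mul_zero, zero_mul, Finset.sum_ite_irrel, Finset.sum_const_zero, Finset.sum_ite_eq,
    Finset.sum_ite_eq', Finset.mem_univ, if_true, Finset.sum_mul]
  exact Finset.sum_congr rfl fun q1 _ => Finset.sum_congr rfl fun q2 _ => by ring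

lemma mact_leg23_tens3 {V : Matrix (ι × ι) (ι × ι) ℂ} {b c b' c' : EuclideanSpace ℂ ι}
    (h : mact V (tens b c) = tens b' c') (a : EuclideanSpace ℂ ι) :
    mact (leg23 V) (tens3 a b c) = tens3 a b' c' := by
  ext p
  have h1 : (∑ j : ι × ι, V (p.2.1, p.2.2) j * tens b c j) = b' p.2.1 * c' p.2.2 :=
    congrFun (congrArg WithLp.ofLp h) (p.2.1, p.2.2)
  show (∑ q : ι × ι × ι, leg23 V p q * tens3 a b c q) = a p.1 * b' p.2.1 * c' p.2.2
  have h2 : a p.1 * b' p.2.1 * c' p.2.2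
      = (∑ j : ι × ι, V (p.2.1, p.2.2) j * tens b c j) * a p.1 := by rw [h1]; ring
  rw [h2, Finset.sum_mul, Fintype.sum_prod_type]
  simp only [leg23, tens3, tens_apply, Fintype.sum_prod_type, mul_ite, ite_mul, mul_one, one_mul,
    mul_zero, zero_mul, Finset.sum_ite_irrel, Finset.sum_const_zero, Finset.sum_ite_eq,
    Finset.sum_ite_eq', Finset.mem_univ, if_true, Finset.sum_mul]
  exact Finset.sum_congr rfl fun q1 _ => Finset.sum_congr rfl fun q2 _ => by ring

lemma mact_leg13_tens3_apply {V : Matrix (ι × ι) (ι × ι) ℂ} (a b c : EuclideanSpace ℂ ι)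
    (p : ι × ι × ι) :
    mact (leg13 V) (tens3 a b c) p = b p.2.1 * mact V (tens a c) (p.1, p.2.2) := by
  show (∑ q : ι × ι × ι, leg13 V p q * tens3 a b c q)
      = b p.2.1 * ∑ j : ι × ι, V (p.1, p.2.2) j * tens a c j
  rw [Finset.mul_sum, Fintype.sum_prod_type]
  simp only [leg13, tens3, tens_apply, Fintype.sum_prod_type, mul_ite, ite_mul, mul_one, one_mul,
    mul_zero, zero_mul, Finset.sum_ite_irrel, Finset.sum_const_zero, Finset.sum_ite_eq,
    Finset.sum_ite_eq', Finset.mem_univ, if_true, Finset.mul_sum]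
  exact Finset.sum_congr rfl fun q1 _ => Finset.sum_congr rfl fun q2 _ => by ring

lemma core {V : Matrix (ι × ι) (ι × ι) ℂ} (hV : IsMU V) {a b c : EuclideanSpace ℂ ι}
    (hb : b ≠ 0) (hab : mact V (tens a b) = tens a b) (hbc : mact V (tens b c) = tens b c) :
    mact V (tens a c) = tens a c := by
  set w := tens3 a b c with hw
  have h12 : mact (leg12 V) w = w := mact_leg12_tens3 hab c
  have h23 : mact (leg23 V) w = w := mact_leg23_tens3 hbc a
  have key : ∀ x : EuclideanSpace ℂ (ι × ι × ι),
      mact (leg12 V.conjTranspose) (mact (leg12 V) x) = x := by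
    intro x; rw [← mact_mul, leg12_mul, hV.2.1, leg12_one, mact_one]
  have hpent : mact (leg12 V) (mact (leg13 V) w) = w := by
    have h := congrArg (fun M => mact M w) hV.2.2
    simp only [mact_mul] at h
    rw [h23] at h
    rw [h, h12, h23]
  have h13 : mact (leg13 V) w = w := by
    calc mact (leg13 V) w
        = mact (leg12 V.conjTranspose) (mact (leg12 V) (mact (leg13 V) w)) := (key _).symm
      _ = mact (leg12 V.conjTranspose) w := by rw [hpent]
      _ = mact (leg12 V.conjTranspose) (mact (leg12 V) w) := by rw [h12]
      _ = w := key _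
  obtain ⟨y0, hy0⟩ : ∃ y, b y ≠ 0 := by
    by_contra hno
    push_neg at hno
    exact hb (PiLp.ext fun y => hno y)
  ext pq
  have h := congrFun (congrArg WithLp.ofLp h13) (pq.1, y0, pq.2)
  rw [mact_leg13_tens3_apply] at h
  have h' : b y0 * mact V (tens a c) (pq.1, pq.2) = b y0 * (a pq.1 * c pq.2) := by
    rw [h]; show a pq.1 * b y0 * c pq.2 = _; ring
  have := mul_left_cancel₀ hy0 h'
  simpa [tens_apply] using this

end Core
section Sums
variable {M : Type*} [AddCommMonoid M]
variable {α β γ δ ε : Type*} [Fintype α] [Fintype β] [Fintype γ] [Fintype δ] [Fintype ε]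

lemma sum_move3 (G : α → β → γ → M) :
    (∑ x, ∑ a, ∑ b, G x a b) = ∑ a, ∑ b, ∑ x, G x a b := by
  rw [Finset.sum_comm]
  exact Finset.sum_congr rfl fun a _ => Finset.sum_comm

lemma sum_move4 (G : α → β → γ → δ → M) :
    (∑ x, ∑ a, ∑ b, ∑ c, G x a b c) = ∑ a, ∑ b, ∑ c, ∑ x, G x a b c := by
  rw [Finset.sum_comm]
  exact Finset.sum_congr rfl fun a _ => sum_move3 _

lemma sum_move5 (G : α → β → γ → δ → ε → M) :
    (∑ x, ∑ a, ∑ b, ∑ c, ∑ d, G x a b c d) = ∑ a, ∑ b, ∑ c, ∑ d, ∑ x, G x a b c d := by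
  rw [Finset.sum_comm]
  exact Finset.sum_congr rfl fun a _ => sum_move4 _

end Sums

section Exchange
variable {M : Type*} [AddCommMonoid M]
variable {ι : Type*} [Fintype ι]

lemma sum_exchange7 (F : ι → ι → ι → ι → ι → ι → ι → M) :
    (∑ x, ∑ y, ∑ u, ∑ v, ∑ a, ∑ b, ∑ c, F x y u v a b c)
      = ∑ a, ∑ b, ∑ c, ∑ x, ∑ y, ∑ u, ∑ v, F x y u v a b c := by
  calc (∑ x, ∑ y, ∑ u, ∑ v, ∑ a, ∑ b, ∑ c, F x y u v a b c)
      = ∑ x, ∑ y, ∑ u, ∑ a, ∑ b, ∑ c, ∑ v, F x y u v a b c :=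
        Finset.sum_congr rfl fun x _ => Finset.sum_congr rfl fun y _ =>
          Finset.sum_congr rfl fun u _ => sum_move4 _
    _ = ∑ x, ∑ y, ∑ a, ∑ b, ∑ c, ∑ u, ∑ v, F x y u v a b c :=
        Finset.sum_congr rfl fun x _ => Finset.sum_congr rfl fun y _ => sum_move4 _
    _ = ∑ x, ∑ a, ∑ b, ∑ c, ∑ y, ∑ u, ∑ v, F x y u v a b c :=
        Finset.sum_congr rfl fun x _ => sum_move4 _
    _ = ∑ a, ∑ b, ∑ c, ∑ x, ∑ y, ∑ u, ∑ v, F x y u v a b c := sum_move4 _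

end Exchange
section Tsq
variable {ι : Type*} [Fintype ι] [DecidableEq ι]

lemma mact_tens_sum (V : Matrix (ι × ι) (ι × ι) ℂ) (a b : EuclideanSpace ℂ ι) (r : ι × ι) :
    (∑ y, ∑ v, V r (y, v) * (a y * b v)) = mact V (tens a b) r := by
  rw [mact_apply, Fintype.sum_prod_type]
  rfl

lemma mul_mul_sum2 {ι : Type*} [Fintype ι] (A B : ℂ) (C : ι → ι → ℂ) :
    A * (B * ∑ y, ∑ v, C y v) = ∑ y, ∑ v, A * (B * C y v) := by
  simp only [Finset.mul_sum]

lemma Tsq {V : Matrix (ι × ι) (ι × ι) ℂ} (hV : IsMU V) {f : EuclideanSpace ℂ ι}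
    (hff : mact V (tens f f) = tens f f)
    (hf1 : (∑ x, (starRingEnd ℂ) (f x) * f x) = (1 : ℂ)) :
    Lslice V f f * Lslice V f f = Lslice V f f := by
  have hffc : ∀ r : ι × ι, (∑ y, ∑ v, V r (y, v) * (f y * f v)) = f r.1 * f r.2 := by
    intro r
    rw [mact_tens_sum, hff]
    rfl
  have hconj : ∀ r : ι × ι,
      (∑ x, ∑ u, (starRingEnd ℂ) (f x) * (starRingEnd ℂ) (f u) * V.conjTranspose (x, u) r)
        = (starRingEnd ℂ) (f r.1) * (starRingEnd ℂ) (f r.2) := by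
    intro r
    have hb : ∀ x u : ι, (starRingEnd ℂ) (f x) * (starRingEnd ℂ) (f u) * V.conjTranspose (x, u) r
        = (starRingEnd ℂ) (V r (x, u) * (f x * f u)) := by
      intro x u
      rw [Matrix.conjTranspose_apply, Complex.star_def, map_mul, map_mul]
      ring
    simp only [hb, ← map_sum]
    rw [hffc r, map_mul]
  apply Matrix.ext; intro c w
  rw [Matrix.mul_apply]
  calc (∑ z, Lslice V f f c z * Lslice V f f z w)
      = ∑ z, ∑ x, ∑ y, ∑ u, ∑ v,
          ((starRingEnd ℂ) (f x) * f y * V (x, c) (y, z)) *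
            ((starRingEnd ℂ) (f u) * f v * V (u, z) (v, w)) := by
        refine Finset.sum_congr rfl fun z _ => ?_
        show (∑ x, ∑ y, (starRingEnd ℂ) (f x) * f y * V (x, c) (y, z)) *
            (∑ u, ∑ v, (starRingEnd ℂ) (f u) * f v * V (u, z) (v, w)) = _
        rw [Finset.sum_mul]
        refine Finset.sum_congr rfl fun x _ => ?_
        rw [Finset.sum_mul]
        refine Finset.sum_congr rfl fun y _ => ?_
        rw [Finset.mul_sum]
        refine Finset.sum_congr rfl fun u _ => ?_
        rw [Finset.mul_sum]
    _ = ∑ x, ∑ y, ∑ u, ∑ v, ∑ z,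
          ((starRingEnd ℂ) (f x) * f y * V (x, c) (y, z)) *
            ((starRingEnd ℂ) (f u) * f v * V (u, z) (v, w)) := sum_move5 _
    _ = ∑ x, ∑ y, ∑ u, ∑ v,
          ((starRingEnd ℂ) (f x) * (starRingEnd ℂ) (f u) * (f y * f v)) *
            (leg13 V * leg23 V) (x, u, c) (y, v, w) := by
        refine Finset.sum_congr rfl fun x _ => Finset.sum_congr rfl fun y _ =>
          Finset.sum_congr rfl fun u _ => Finset.sum_congr rfl fun v _ => ?_
        rw [entry1, Finset.mul_sum]
        exact Finset.sum_congr rfl fun z _ => by ring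
    _ = ∑ x, ∑ y, ∑ u, ∑ v, ∑ a, ∑ b, ∑ m,
          ((starRingEnd ℂ) (f x) * (starRingEnd ℂ) (f u) * (f y * f v)) *
            (V.conjTranspose (x, u) (a, b) * (V (b, c) (m, w) * V (a, m) (y, v))) := by
        simp only [pent1 hV, entry2, Finset.mul_sum]
    _ = ∑ a, ∑ b, ∑ m, ∑ x, ∑ y, ∑ u, ∑ v,
          ((starRingEnd ℂ) (f x) * (starRingEnd ℂ) (f u) * (f y * f v)) *
            (V.conjTranspose (x, u) (a, b) * (V (b, c) (m, w) * V (a, m) (y, v))) :=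
        sum_exchange7 _
    _ = ∑ a, ∑ b, ∑ m,
          (∑ x, ∑ u, (starRingEnd ℂ) (f x) * (starRingEnd ℂ) (f u) * V.conjTranspose (x, u) (a, b)) *
            (V (b, c) (m, w) * (∑ y, ∑ v, V (a, m) (y, v) * (f y * f v))) := by
        refine Finset.sum_congr rfl fun a _ => Finset.sum_congr rfl fun b _ =>
          Finset.sum_congr rfl fun m _ => ?_
        calc (∑ x, ∑ y, ∑ u, ∑ v,
              ((starRingEnd ℂ) (f x) * (starRingEnd ℂ) (f u) * (f y * f v)) *
                (V.conjTranspose (x, u) (a, b) * (V (b, c) (m, w) * V (a, m) (y, v))))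
            = ∑ x, ∑ u, ∑ y, ∑ v,
              ((starRingEnd ℂ) (f x) * (starRingEnd ℂ) (f u) * (f y * f v)) *
                (V.conjTranspose (x, u) (a, b) * (V (b, c) (m, w) * V (a, m) (y, v))) :=
              Finset.sum_congr rfl fun x _ => Finset.sum_comm
          _ = _ := by
              rw [Finset.sum_mul]
              refine Finset.sum_congr rfl fun x _ => ?_
              rw [Finset.sum_mul]
              refine Finset.sum_congr rfl fun u _ => ?_
              rw [mul_mul_sum2]
              exact Finset.sum_congr rfl fun y _ => Finset.sum_congr rfl fun v _ => by ring
    _ = ∑ a, ∑ b, ∑ m,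
          ((starRingEnd ℂ) (f a) * (starRingEnd ℂ) (f b)) * (V (b, c) (m, w) * (f a * f m)) := by
        refine Finset.sum_congr rfl fun a _ => Finset.sum_congr rfl fun b _ =>
          Finset.sum_congr rfl fun m _ => ?_
        rw [hconj (a, b), hffc (a, m)]
    _ = (∑ a, (starRingEnd ℂ) (f a) * f a) *
          (∑ b, ∑ m, (starRingEnd ℂ) (f b) * f m * V (b, c) (m, w)) := by
        rw [Finset.sum_mul]
        refine Finset.sum_congr rfl fun a _ => ?_
        simp only [Finset.mul_sum]
        exact Finset.sum_congr rfl fun b _ => Finset.sum_congr rfl fun m _ => by ring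
    _ = Lslice V f f c w := by rw [hf1, one_mul]; rfl

end Tsq
section Dsq
variable {ι : Type*} [Fintype ι] [DecidableEq ι]

lemma Dsq {V : Matrix (ι × ι) (ι × ι) ℂ} (hV : IsMU V) {e : EuclideanSpace ℂ ι}
    (hee : mact V (tens e e) = tens e e)
    (he1 : (∑ x, (starRingEnd ℂ) (e x) * e x) = (1 : ℂ)) :
    Rslice V e e * Rslice V e e = Rslice V e e := by
  have heeH : mact V.conjTranspose (tens e e) = tens e e :=
    mact_fix_conjTranspose hV.2.1 hee
  have heec : ∀ r : ι × ι, (∑ y, ∑ v, V.conjTranspose r (y, v) * (e y * e v)) = e r.1 * e r.2 := by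
    intro r
    rw [mact_tens_sum, heeH]
    rfl
  have hconj : ∀ r : ι × ι,
      (∑ x, ∑ u, (starRingEnd ℂ) (e x) * (starRingEnd ℂ) (e u) * V (x, u) r)
        = (starRingEnd ℂ) (e r.1) * (starRingEnd ℂ) (e r.2) := by
    intro r
    have hb : ∀ x u : ι, (starRingEnd ℂ) (e x) * (starRingEnd ℂ) (e u) * V (x, u) r
        = (starRingEnd ℂ) (V.conjTranspose r (x, u) * (e x * e u)) := by
      intro x u
      rw [Matrix.conjTranspose_apply, Complex.star_def, map_mul, map_mul, Complex.conj_conj]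
      ring
    simp only [hb, ← map_sum]
    rw [heec r, map_mul]
  apply Matrix.ext; intro a b
  rw [Matrix.mul_apply]
  calc (∑ m, Rslice V e e a m * Rslice V e e m b)
      = ∑ m, ∑ x, ∑ y, ∑ u, ∑ v,
          ((starRingEnd ℂ) (e x) * e y * V (a, x) (m, y)) *
            ((starRingEnd ℂ) (e u) * e v * V (m, u) (b, v)) := by
        refine Finset.sum_congr rfl fun m _ => ?_
        show (∑ x, ∑ y, (starRingEnd ℂ) (e x) * e y * V (a, x) (m, y)) *
            (∑ u, ∑ v, (starRingEnd ℂ) (e u) * e v * V (m, u) (b, v)) = _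
        rw [Finset.sum_mul]
        refine Finset.sum_congr rfl fun x _ => ?_
        rw [Finset.sum_mul]
        refine Finset.sum_congr rfl fun y _ => ?_
        rw [Finset.mul_sum]
        refine Finset.sum_congr rfl fun u _ => ?_
        rw [Finset.mul_sum]
    _ = ∑ x, ∑ y, ∑ u, ∑ v, ∑ m,
          ((starRingEnd ℂ) (e x) * e y * V (a, x) (m, y)) *
            ((starRingEnd ℂ) (e u) * e v * V (m, u) (b, v)) := sum_move5 _
    _ = ∑ x, ∑ y, ∑ u, ∑ v,
          ((starRingEnd ℂ) (e x) * (starRingEnd ℂ) (e u) * (e y * e v)) *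
            (leg12 V * leg13 V) (a, x, u) (b, y, v) := by
        refine Finset.sum_congr rfl fun x _ => Finset.sum_congr rfl fun y _ =>
          Finset.sum_congr rfl fun u _ => Finset.sum_congr rfl fun v _ => ?_
        rw [entry3, Finset.mul_sum]
        exact Finset.sum_congr rfl fun m _ => by ring
    _ = ∑ x, ∑ y, ∑ u, ∑ v, ∑ r2, ∑ r3, ∑ m,
          ((starRingEnd ℂ) (e x) * (starRingEnd ℂ) (e u) * (e y * e v)) *
            (V (x, u) (r2, r3) * (V (a, r2) (b, m) * V.conjTranspose (m, r3) (y, v))) := by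
        simp only [pent2 hV, entry4, Finset.mul_sum]
    _ = ∑ r2, ∑ r3, ∑ m, ∑ x, ∑ y, ∑ u, ∑ v,
          ((starRingEnd ℂ) (e x) * (starRingEnd ℂ) (e u) * (e y * e v)) *
            (V (x, u) (r2, r3) * (V (a, r2) (b, m) * V.conjTranspose (m, r3) (y, v))) :=
        sum_exchange7 _
    _ = ∑ r2, ∑ r3, ∑ m,
          (∑ x, ∑ u, (starRingEnd ℂ) (e x) * (starRingEnd ℂ) (e u) * V (x, u) (r2, r3)) *
            (V (a, r2) (b, m) * (∑ y, ∑ v, V.conjTranspose (m, r3) (y, v) * (e y * e v))) := by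
        refine Finset.sum_congr rfl fun r2 _ => Finset.sum_congr rfl fun r3 _ =>
          Finset.sum_congr rfl fun m _ => ?_
        calc (∑ x, ∑ y, ∑ u, ∑ v,
              ((starRingEnd ℂ) (e x) * (starRingEnd ℂ) (e u) * (e y * e v)) *
                (V (x, u) (r2, r3) * (V (a, r2) (b, m) * V.conjTranspose (m, r3) (y, v))))
            = ∑ x, ∑ u, ∑ y, ∑ v,
              ((starRingEnd ℂ) (e x) * (starRingEnd ℂ) (e u) * (e y * e v)) *
                (V (x, u) (r2, r3) * (V (a, r2) (b, m) * V.conjTranspose (m, r3) (y, v))) :=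
              Finset.sum_congr rfl fun x _ => Finset.sum_comm
          _ = _ := by
              rw [Finset.sum_mul]
              refine Finset.sum_congr rfl fun x _ => ?_
              rw [Finset.sum_mul]
              refine Finset.sum_congr rfl fun u _ => ?_
              rw [mul_mul_sum2]
              exact Finset.sum_congr rfl fun y _ => Finset.sum_congr rfl fun v _ => by ring
    _ = ∑ r2, ∑ r3, ∑ m,
          ((starRingEnd ℂ) (e r2) * (starRingEnd ℂ) (e r3)) * (V (a, r2) (b, m) * (e m * e r3)) := by
        refine Finset.sum_congr rfl fun r2 _ => Finset.sum_congr rfl fun r3 _ =>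
          Finset.sum_congr rfl fun m _ => ?_
        rw [hconj (r2, r3), heec (m, r3)]
    _ = (∑ r3, (starRingEnd ℂ) (e r3) * e r3) *
          (∑ r2, ∑ m, (starRingEnd ℂ) (e r2) * e m * V (a, r2) (b, m)) := by
        rw [Finset.sum_comm, Finset.sum_mul]
        refine Finset.sum_congr rfl fun r3 _ => ?_
        simp only [Finset.mul_sum]
        exact Finset.sum_congr rfl fun r2 _ => Finset.sum_congr rfl fun m _ => by ring
    _ = Rslice V e e a b := by rw [he1, one_mul]; rfl

end Dsq
section Ops
variable {ι : Type*} [Fintype ι] [DecidableEq ι]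

lemma mact_Lslice_apply (V : Matrix (ι × ι) (ι × ι) ℂ) (ξ η v : EuclideanSpace ℂ ι) (c : ι) :
    mact (Lslice V ξ η) v c = ∑ x, (starRingEnd ℂ) (ξ x) * mact V (tens η v) (x, c) := by
  simp only [← mact_tens_sum]
  calc mact (Lslice V ξ η) v c
      = ∑ z, ∑ x, ∑ y, (starRingEnd ℂ) (ξ x) * η y * V (x, c) (y, z) * v z := by
        refine Finset.sum_congr rfl fun z _ => ?_
        show Lslice V ξ η c z * v z = _
        rw [Lslice, Finset.sum_mul]
        exact Finset.sum_congr rfl fun x _ => by rw [Finset.sum_mul]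
    _ = ∑ x, ∑ y, ∑ z, (starRingEnd ℂ) (ξ x) * η y * V (x, c) (y, z) * v z := sum_move3 _
    _ = ∑ x, (starRingEnd ℂ) (ξ x) * (∑ y, ∑ z, V (x, c) (y, z) * (η y * v z)) := by
        refine Finset.sum_congr rfl fun x _ => ?_
        simp only [Finset.mul_sum]
        exact Finset.sum_congr rfl fun y _ => Finset.sum_congr rfl fun z _ => by ring

lemma mact_Rslice_apply (V : Matrix (ι × ι) (ι × ι) ℂ) (ξ η v : EuclideanSpace ℂ ι) (a : ι) :
    mact (Rslice V ξ η) v a = ∑ x, (starRingEnd ℂ) (ξ x) * mact V (tens v η) (a, x) := by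
  simp only [← mact_tens_sum]
  calc mact (Rslice V ξ η) v a
      = ∑ b, ∑ x, ∑ y, (starRingEnd ℂ) (ξ x) * η y * V (a, x) (b, y) * v b := by
        refine Finset.sum_congr rfl fun b _ => ?_
        show Rslice V ξ η a b * v b = _
        rw [Rslice, Finset.sum_mul]
        exact Finset.sum_congr rfl fun x _ => by rw [Finset.sum_mul]
    _ = ∑ x, ∑ y, ∑ b, (starRingEnd ℂ) (ξ x) * η y * V (a, x) (b, y) * v b := sum_move3 _
    _ = ∑ x, (starRingEnd ℂ) (ξ x) * (∑ b, ∑ y, V (a, x) (b, y) * (v b * η y)) := by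
        refine Finset.sum_congr rfl fun x _ => ?_
        rw [Finset.sum_comm]
        simp only [Finset.mul_sum]
        exact Finset.sum_congr rfl fun b _ => Finset.sum_congr rfl fun y _ => by ring

lemma norm_sq_eud (v : EuclideanSpace ℂ ι) : ‖v‖ ^ 2 = ∑ i, ‖v i‖ ^ 2 := by
  rw [EuclideanSpace.norm_eq, Real.sq_sqrt]
  positivity

lemma norm_mact {V : Matrix (ι × ι) (ι × ι) ℂ} (hU : V.conjTranspose * V = 1)
    (v : EuclideanSpace ℂ (ι × ι)) : ‖mact V v‖ = ‖v‖ :=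
  norm_of_inner_eq (inner_mact_mact hU v v)

lemma norm_tens_right {a b : EuclideanSpace ℂ ι} (hb : ‖b‖ = 1) : ‖tens a b‖ = ‖a‖ := by
  have h : ⟪tens a b, tens a b⟫_ℂ = ⟪a, a⟫_ℂ := by rw [inner_tens, inner_self_one hb, mul_one]
  exact norm_of_inner_eq h

lemma norm_tens_left {a b : EuclideanSpace ℂ ι} (ha : ‖a‖ = 1) : ‖tens a b‖ = ‖b‖ := by
  have h : ⟪tens a b, tens a b⟫_ℂ = ⟪b, b⟫_ℂ := by rw [inner_tens, inner_self_one ha, one_mul]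
  exact norm_of_inner_eq h

lemma comp_contract {f : EuclideanSpace ℂ ι} (hf : ‖f‖ = 1) (w : EuclideanSpace ℂ (ι × ι))
    (g : EuclideanSpace ℂ ι) (hg : ∀ c, g c = ∑ x, (starRingEnd ℂ) (f x) * w (x, c)) :
    ‖g‖ ≤ ‖w‖ := by
  have hsq : ‖g‖ ^ 2 ≤ ‖w‖ ^ 2 := by
    rw [norm_sq_eud, norm_sq_eud]
    calc (∑ c, ‖g c‖ ^ 2)
        ≤ ∑ c, ∑ x, ‖w (x, c)‖ ^ 2 := by
          refine Finset.sum_le_sum fun c _ => ?_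
          set wc : EuclideanSpace ℂ ι := WithLp.toLp 2 (fun x => w (x, c)) with hwc
          have h1 : g c = ⟪f, wc⟫_ℂ := by rw [hg, inner_eud]
          have h2 : ‖g c‖ ≤ ‖wc‖ := by
            rw [h1]
            calc ‖⟪f, wc⟫_ℂ‖ ≤ ‖f‖ * ‖wc‖ := norm_inner_le_norm _ _
              _ = ‖wc‖ := by rw [hf, one_mul]
          calc ‖g c‖ ^ 2 ≤ ‖wc‖ ^ 2 := by
                have := norm_nonneg (g c)
                nlinarith [norm_nonneg wc]
            _ = ∑ x, ‖wc x‖ ^ 2 := norm_sq_eud _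
            _ = ∑ x, ‖w (x, c)‖ ^ 2 := rfl
      _ = ∑ p : ι × ι, ‖w p‖ ^ 2 := by
          rw [Fintype.sum_prod_type]
          rw [Finset.sum_comm]
  nlinarith [norm_nonneg g, norm_nonneg w]

end Ops
section Contract
variable {ι : Type*} [Fintype ι] [DecidableEq ι]

lemma comp_contract_R {f : EuclideanSpace ℂ ι} (hf : ‖f‖ = 1) (w : EuclideanSpace ℂ (ι × ι))
    (g : EuclideanSpace ℂ ι) (hg : ∀ a, g a = ∑ x, (starRingEnd ℂ) (f x) * w (a, x)) :
    ‖g‖ ≤ ‖w‖ := by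
  have hsq : ‖g‖ ^ 2 ≤ ‖w‖ ^ 2 := by
    rw [norm_sq_eud, norm_sq_eud]
    calc (∑ a, ‖g a‖ ^ 2)
        ≤ ∑ a, ∑ x, ‖w (a, x)‖ ^ 2 := by
          refine Finset.sum_le_sum fun a _ => ?_
          set wa : EuclideanSpace ℂ ι := WithLp.toLp 2 (fun x => w (a, x)) with hwa
          have h1 : g a = ⟪f, wa⟫_ℂ := by rw [hg, inner_eud]
          have h2 : ‖g a‖ ≤ ‖wa‖ := by
            rw [h1]
            calc ‖⟪f, wa⟫_ℂ‖ ≤ ‖f‖ * ‖wa‖ := norm_inner_le_norm _ _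
              _ = ‖wa‖ := by rw [hf, one_mul]
          calc ‖g a‖ ^ 2 ≤ ‖wa‖ ^ 2 := by
                have := norm_nonneg (g a)
                nlinarith [norm_nonneg wa]
            _ = ∑ x, ‖wa x‖ ^ 2 := norm_sq_eud _
            _ = ∑ x, ‖w (a, x)‖ ^ 2 := rfl
      _ = ∑ p : ι × ι, ‖w p‖ ^ 2 := by rw [Fintype.sum_prod_type]
  nlinarith [norm_nonneg g, norm_nonneg w]

lemma T_contract {V : Matrix (ι × ι) (ι × ι) ℂ} (hV : IsMU V) {f : EuclideanSpace ℂ ι}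
    (hf : ‖f‖ = 1) (v : EuclideanSpace ℂ ι) : ‖mact (Lslice V f f) v‖ ≤ ‖v‖ := by
  calc ‖mact (Lslice V f f) v‖ ≤ ‖mact V (tens f v)‖ :=
        comp_contract hf _ _ (fun c => mact_Lslice_apply V f f v c)
    _ = ‖tens f v‖ := norm_mact hV.2.1 _
    _ = ‖v‖ := norm_tens_left hf

lemma D_contract {V : Matrix (ι × ι) (ι × ι) ℂ} (hV : IsMU V) {e : EuclideanSpace ℂ ι}
    (he : ‖e‖ = 1) (v : EuclideanSpace ℂ ι) : ‖mact (Rslice V e e) v‖ ≤ ‖v‖ := by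
  calc ‖mact (Rslice V e e) v‖ ≤ ‖mact V (tens v e)‖ :=
        comp_contract_R he _ _ (fun a => mact_Rslice_apply V e e v a)
    _ = ‖tens v e‖ := norm_mact hV.2.1 _
    _ = ‖v‖ := norm_tens_right he

end Contract

section SA
variable {κ : Type*} [Fintype κ]

lemma idem_selfadj {A : Matrix κ κ ℂ} (h2 : ∀ v, mact A (mact A v) = mact A v)
    (hc : ∀ v, ‖mact A v‖ ≤ ‖v‖) (u v : EuclideanSpace ℂ κ) :
    ⟪mact A u, v⟫_ℂ = ⟪u, mact A v⟫_ℂ := by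
  have orth : ∀ x y : EuclideanSpace ℂ κ, mact A x = x → mact A y = 0 → ⟪x, y⟫_ℂ = 0 := by
    intro x y hx hy
    by_contra hs
    set s : ℂ := ⟪x, y⟫_ℂ with hsdef
    set t : ℝ := 1 / (‖y‖ ^ 2 + 1) with ht
    have ht0 : 0 < t := by positivity
    set c : ℂ := -(t : ℂ) * (starRingEnd ℂ) s with hcdef
    have key : ‖x‖ ≤ ‖x + c • y‖ := by
      have hfix : mact A (x + c • y) = x := by
        rw [map_add, map_smul, hx, hy, smul_zero, add_zero]
      calc ‖x‖ = ‖mact A (x + c • y)‖ := by rw [hfix]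
        _ ≤ ‖x + c • y‖ := hc _
    have hexp : ‖x + c • y‖ ^ 2 = ‖x‖ ^ 2 + 2 * Complex.re ⟪x, c • y⟫_ℂ + ‖c • y‖ ^ 2 := by
      exact norm_add_sq (𝕜 := ℂ) x (c • y)
    have hip : ⟪x, c • y⟫_ℂ = ((-(t * ‖s‖ ^ 2) : ℝ) : ℂ) := by
      rw [inner_smul_right, ← hsdef, hcdef]
      have habs : (‖s‖ : ℝ) ^ 2 = Complex.normSq s := by
        rw [Complex.sq_norm]
      rw [mul_assoc, mul_comm ((starRingEnd ℂ) s) s, Complex.mul_conj, habs]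
      push_cast
      ring
    have hre : Complex.re ⟪x, c • y⟫_ℂ = -(t * ‖s‖ ^ 2) := by
      rw [hip, Complex.ofReal_re]
    have hnc : ‖c • y‖ = t * ‖s‖ * ‖y‖ := by
      rw [norm_smul, hcdef, norm_mul, norm_neg]
      simp [RCLike.norm_conj, abs_of_pos ht0]
      try ring
    have hsq : ‖x‖ ^ 2 ≤ ‖x + c • y‖ ^ 2 := by
      have := norm_nonneg x
      nlinarith [norm_nonneg (x + c • y)]
    rw [hexp, hre, hnc] at hsq
    have hty : t * ‖y‖ ^ 2 < 1 := by
      rw [ht]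
      rw [div_mul_eq_mul_div, one_mul, div_lt_one (by positivity)]
      linarith
    have hs2 : ‖s‖ ^ 2 > 0 := by
      have : s ≠ 0 := hs
      have := norm_pos_iff.mpr this
      positivity
    have h3 : 0 < t * ‖s‖ ^ 2 := mul_pos ht0 hs2
    nlinarith [h3, mul_lt_mul_of_pos_left hty h3]
  have hAu : mact A (mact A u) = mact A u := h2 u
  have hAv : mact A (mact A v) = mact A v := h2 v
  have e1 : ⟪mact A u, v⟫_ℂ = ⟪mact A u, mact A v⟫_ℂ := by
    have h0 : ⟪mact A u, v - mact A v⟫_ℂ = 0 :=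
      orth _ _ hAu (by rw [map_sub, hAv, sub_self])
    have := inner_sub_right (𝕜 := ℂ) (mact A u) v (mact A v)
    rw [h0] at this
    linear_combination -this
  have e2 : ⟪mact A v, u⟫_ℂ = ⟪mact A v, mact A u⟫_ℂ := by
    have h0 : ⟪mact A v, u - mact A u⟫_ℂ = 0 :=
      orth _ _ hAv (by rw [map_sub, hAu, sub_self])
    have := inner_sub_right (𝕜 := ℂ) (mact A v) u (mact A u)
    rw [h0] at this
    linear_combination -this
  calc ⟪mact A u, v⟫_ℂ = ⟪mact A u, mact A v⟫_ℂ := e1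
    _ = (starRingEnd ℂ) ⟪mact A v, mact A u⟫_ℂ := (inner_conj_symm _ _).symm
    _ = (starRingEnd ℂ) ⟪mact A v, u⟫_ℂ := by rw [e2]
    _ = ⟪u, mact A v⟫_ℂ := inner_conj_symm _ _

end SA
section Proj
variable {ι : Type*} [Fintype ι] [DecidableEq ι]

lemma inner_sum_one {e : EuclideanSpace ℂ ι} (he : ‖e‖ = 1) :
    (∑ x, (starRingEnd ℂ) (e x) * e x) = (1 : ℂ) := by
  rw [← inner_eud]; exact inner_self_one he

lemma conj_inner_self (u : EuclideanSpace ℂ ι) :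
    (starRingEnd ℂ) ⟪u, u⟫_ℂ = ⟪u, u⟫_ℂ := by
  rw [inner_self_eq_norm_sq_to_K]
  rw [map_pow, RCLike.conj_ofReal]

lemma Dproj {V : Matrix (ι × ι) (ι × ι) ℂ} (hV : IsMU V) {e : EuclideanSpace ℂ ι}
    (he : ‖e‖ = 1) (hfix : Fixed V e)
    (huniq : ∀ ξ, Fixed V ξ → ∃ c : ℂ, ξ = c • e) (v : EuclideanSpace ℂ ι) :
    mact (Rslice V e e) v = ⟪e, v⟫_ℂ • e := by
  have he1 := inner_sum_one he
  have hee : mact V (tens e e) = tens e e := hfix e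
  have hD2 : ∀ w, mact (Rslice V e e) (mact (Rslice V e e) w) = mact (Rslice V e e) w := by
    intro w
    rw [← mact_mul, Dsq hV hee he1]
  have hDc := D_contract hV he
  set u : EuclideanSpace ℂ ι := mact (Rslice V e e) v with hu
  have hDu : mact (Rslice V e e) u = u := hD2 v
  have hcomp : ∀ a, u a = ∑ x, (starRingEnd ℂ) (e x) * mact V (tens u e) (a, x) := by
    intro a
    conv_lhs => rw [← hDu]
    exact mact_Rslice_apply V e e u a
  set w' : EuclideanSpace ℂ (ι × ι) := mact V (tens u e) with hw'
  have hip1 : ⟪tens u e, w'⟫_ℂ = ⟪u, u⟫_ℂ := by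
    rw [inner_eud, Fintype.sum_prod_type, inner_eud]
    refine Finset.sum_congr rfl fun a _ => ?_
    calc (∑ x, (starRingEnd ℂ) (tens u e (a, x)) * w' (a, x))
        = (starRingEnd ℂ) (u a) * ∑ x, (starRingEnd ℂ) (e x) * w' (a, x) := by
          rw [Finset.mul_sum]
          refine Finset.sum_congr rfl fun x _ => ?_
          rw [tens_apply, map_mul]
          ring
      _ = (starRingEnd ℂ) (u a) * u a := by rw [← hcomp a]
  have hip2 : ⟪w', w'⟫_ℂ = ⟪u, u⟫_ℂ := by
    rw [hw', inner_mact_mact hV.2.1, inner_tens, inner_self_one he, mul_one]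
  have hip3 : ⟪tens u e, tens u e⟫_ℂ = ⟪u, u⟫_ℂ := by
    rw [inner_tens, inner_self_one he, mul_one]
  have hzero : ⟪w' - tens u e, w' - tens u e⟫_ℂ = 0 := by
    simp only [inner_sub_left, inner_sub_right]
    rw [hip1, hip2, hip3]
    have h4 : ⟪w', tens u e⟫_ℂ = (starRingEnd ℂ) ⟪tens u e, w'⟫_ℂ := (inner_conj_symm _ _).symm
    rw [h4, hip1, conj_inner_self]
    ring
  have hwe : w' = tens u e := by
    have := inner_self_eq_zero.mp hzero
    exact sub_eq_zero.mp this
  have hufix : Fixed V u := by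
    intro η
    have he0 : e ≠ 0 := by
      intro h0
      rw [h0, norm_zero] at he
      norm_num at he
    exact core hV he0 hwe (hfix η)
  obtain ⟨c, hc⟩ := huniq u hufix
  have hcval : ⟪e, u⟫_ℂ = c := by
    rw [hc, inner_smul_right, inner_self_one he, mul_one]
  have heu : ⟪e, u⟫_ℂ = ⟪e, v⟫_ℂ := by
    have hDe : mact (Rslice V e e) e = e := by
      ext a
      rw [mact_Rslice_apply, hee]
      calc (∑ x, (starRingEnd ℂ) (e x) * tens e e (a, x))
          = e a * ∑ x, (starRingEnd ℂ) (e x) * e x := by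
            rw [Finset.mul_sum]
            exact Finset.sum_congr rfl fun x _ => by rw [tens_apply]; ring
        _ = e a := by rw [he1, mul_one]
    have hsa := idem_selfadj hD2 hDc e v
    rw [hDe] at hsa
    exact hsa.symm
  have hcv : c = ⟪e, v⟫_ℂ := by rw [← hcval, heu]
  rw [hc, hcv]

lemma J1c {V : Matrix (ι × ι) (ι × ι) ℂ} (hV : IsMU V) {e : EuclideanSpace ℂ ι}
    (he : ‖e‖ = 1) (hfix : Fixed V e)
    (huniq : ∀ ξ, Fixed V ξ → ∃ c : ℂ, ξ = c • e) (v : EuclideanSpace ℂ ι) (a : ι) :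
    (∑ x, (starRingEnd ℂ) (e x) * mact V (tens v e) (a, x)) = ⟪e, v⟫_ℂ * e a := by
  have h := congrFun (congrArg WithLp.ofLp (Dproj hV he hfix huniq v)) a
  rw [mact_Rslice_apply] at h
  rw [h]
  rw [PiLp.smul_apply, smul_eq_mul]

lemma Gproj {V : Matrix (ι × ι) (ι × ι) ℂ} (hV : IsMU V) {e f : EuclideanSpace ℂ ι}
    (he : ‖e‖ = 1) (hf : ‖f‖ = 1) (hfix : Fixed V e)
    (huniq : ∀ ξ, Fixed V ξ → ∃ c : ℂ, ξ = c • e)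
    (hff : mact V (tens f f) = tens f f) :
    mact (Lslice V f f) e = ⟪f, e⟫_ℂ • f := by
  have hf1 := inner_sum_one hf
  have hT2 : ∀ w, mact (Lslice V f f) (mact (Lslice V f f) w) = mact (Lslice V f f) w := by
    intro w
    rw [← mact_mul, Tsq hV hff hf1]
  have hTc := T_contract hV hf
  have hffH : mact V.conjTranspose (tens f f) = tens f f := mact_fix_conjTranspose hV.2.1 hff
  set p : EuclideanSpace ℂ ι := mact (Lslice V f f) e with hp
  set q : EuclideanSpace ℂ (ι × ι) := mact V (tens f e) with hq
  have hpc : ∀ c, p c = ∑ x, (starRingEnd ℂ) (f x) * q (x, c) := fun c =>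
    mact_Lslice_apply V f f e c
  have hfp : ⟪f, p⟫_ℂ = ⟪f, e⟫_ℂ := by
    calc ⟪f, p⟫_ℂ
        = ∑ c, ∑ x, (starRingEnd ℂ) (f c) * ((starRingEnd ℂ) (f x) * q (x, c)) := by
          rw [inner_eud]
          refine Finset.sum_congr rfl fun c _ => ?_
          rw [hpc c, Finset.mul_sum]
      _ = ∑ x, ∑ c, (starRingEnd ℂ) (f x) * (starRingEnd ℂ) (f c) * q (x, c) := by
          rw [Finset.sum_comm]
          exact Finset.sum_congr rfl fun x _ => Finset.sum_congr rfl fun c _ => by ring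
      _ = ⟪tens f f, q⟫_ℂ := by
          rw [inner_eud, Fintype.sum_prod_type]
          refine Finset.sum_congr rfl fun x _ => Finset.sum_congr rfl fun c _ => ?_
          rw [tens_apply, map_mul]
      _ = ⟪f, e⟫_ℂ := by
          rw [hq, inner_mact, hffH, inner_tens, inner_self_one hf, one_mul]
  have hep : ⟪e, p⟫_ℂ = ⟪e, f⟫_ℂ * ⟪f, e⟫_ℂ := by
    calc ⟪e, p⟫_ℂ
        = ∑ c, ∑ x, (starRingEnd ℂ) (e c) * ((starRingEnd ℂ) (f x) * q (x, c)) := by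
          rw [inner_eud]
          refine Finset.sum_congr rfl fun c _ => ?_
          rw [hpc c, Finset.mul_sum]
      _ = ∑ x, (starRingEnd ℂ) (f x) * ∑ c, (starRingEnd ℂ) (e c) * q (x, c) := by
          rw [Finset.sum_comm]
          refine Finset.sum_congr rfl fun x _ => ?_
          rw [Finset.mul_sum]
          exact Finset.sum_congr rfl fun c _ => by ring
      _ = ∑ x, (starRingEnd ℂ) (f x) * (⟪e, f⟫_ℂ * e x) := by
          refine Finset.sum_congr rfl fun x _ => ?_
          rw [hq, J1c hV he hfix huniq f x]
      _ = ⟪e, f⟫_ℂ * ⟪f, e⟫_ℂ := by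
          rw [inner_eud f e, Finset.mul_sum]
          exact Finset.sum_congr rfl fun x _ => by ring
  have hTp : mact (Lslice V f f) p = p := by rw [hp]; exact hT2 e
  have hpp : ⟪p, p⟫_ℂ = ⟪e, p⟫_ℂ := by
    have hsa := idem_selfadj hT2 hTc e p
    rw [← hp] at hsa
    rw [hTp] at hsa
    exact hsa
  set α : ℂ := ⟪f, e⟫_ℂ with hα
  have hef : ⟪e, f⟫_ℂ = (starRingEnd ℂ) α := (inner_conj_symm _ _).symm
  have hpf : ⟪p, f⟫_ℂ = (starRingEnd ℂ) α := by
    rw [← inner_conj_symm, hfp]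
  have hz : ⟪p - α • f, p - α • f⟫_ℂ = 0 := by
    simp only [inner_sub_left, inner_sub_right, inner_smul_left, inner_smul_right]
    rw [hpp, hep, hef, hfp, hpf, inner_self_one hf]
    ring
  exact sub_eq_zero.mp (inner_self_eq_zero.mp hz)

end Proj
section Antisym
variable {ι : Type*} [Fintype ι] [DecidableEq ι]

lemma Tabsorb {V : Matrix (ι × ι) (ι × ι) ℂ} {f g : EuclideanSpace ℂ ι}
    (hf1 : (∑ x, (starRingEnd ℂ) (f x) * f x) = (1 : ℂ))
    (hfg : mact V (tens f g) = tens f g) : mact (Lslice V f f) g = g := by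
  ext c
  rw [mact_Lslice_apply, hfg]
  calc (∑ x, (starRingEnd ℂ) (f x) * tens f g (x, c))
      = (∑ x, (starRingEnd ℂ) (f x) * f x) * g c := by
        rw [Finset.sum_mul]
        exact Finset.sum_congr rfl fun x _ => by rw [tens_apply]; ring
    _ = g c := by rw [hf1, one_mul]

lemma mono_ineq {V : Matrix (ι × ι) (ι × ι) ℂ} (hV : IsMU V) {e f g : EuclideanSpace ℂ ι}
    (he : ‖e‖ = 1) (hfix : Fixed V e) (huniq : ∀ ξ, Fixed V ξ → ∃ c : ℂ, ξ = c • e)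
    (hfn : ‖f‖ = 1) (hffix : mact V (tens f f) = tens f f)
    (hfg : mact V (tens f g) = tens f g) :
    ⟪g, e⟫_ℂ = ⟪f, e⟫_ℂ * ⟪g, f⟫_ℂ := by
  have hf1 := inner_sum_one hfn
  have hT2 : ∀ w, mact (Lslice V f f) (mact (Lslice V f f) w) = mact (Lslice V f f) w := by
    intro w
    rw [← mact_mul, Tsq hV hffix hf1]
  have hTc := T_contract hV hfn
  have hTg : mact (Lslice V f f) g = g := Tabsorb hf1 hfg
  have hsa := idem_selfadj hT2 hTc g e
  rw [hTg, Gproj hV he hfn hfix huniq hffix, inner_smul_right] at hsa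
  exact hsa

set_option maxHeartbeats 1000000 in
lemma antisym {V : Matrix (ι × ι) (ι × ι) ℂ} (hV : IsMU V) {e f g : EuclideanSpace ℂ ι}
    (he : ‖e‖ = 1) (hfix : Fixed V e) (huniq : ∀ ξ, Fixed V ξ → ∃ c : ℂ, ξ = c • e)
    (hf : IsPreSubgroup V e f) (hg : IsPreSubgroup V e g)
    (hfg : mact V (tens f g) = tens f g) (hgf : mact V (tens g f) = tens g f) :
    f = g := by
  obtain ⟨hfn, hfe, hffix⟩ := hf
  obtain ⟨hgn, hge, hgfix⟩ := hg
  have h1 : ⟪g, e⟫_ℂ = ⟪f, e⟫_ℂ * ⟪g, f⟫_ℂ := mono_ineq hV he hfix huniq hfn hffix hfg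
  have h2 : ⟪f, e⟫_ℂ = ⟪g, e⟫_ℂ * ⟪f, g⟫_ℂ := mono_ineq hV he hfix huniq hgn hgfix hgf
  set α : ℂ := ⟪f, e⟫_ℂ with hα
  set β : ℂ := ⟪g, e⟫_ℂ with hβ
  set cc : ℂ := ⟪f, g⟫_ℂ with hccdef
  have hgfc : ⟪g, f⟫_ℂ = (starRingEnd ℂ) cc := (inner_conj_symm _ _).symm
  rw [hgfc] at h1
  have hβ0 : β ≠ 0 := hge.ne'
  have hcc : cc * (starRingEnd ℂ) cc = 1 := by
    have hchain : β * 1 = β * (cc * (starRingEnd ℂ) cc) := by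
      calc β * 1 = β := mul_one β
        _ = α * (starRingEnd ℂ) cc := h1
        _ = (β * cc) * (starRingEnd ℂ) cc := by rw [← h2]
        _ = β * (cc * (starRingEnd ℂ) cc) := by ring
    exact (mul_left_cancel₀ hβ0 hchain).symm
  have hgcf : g = cc • f := by
    have hz : ⟪g - cc • f, g - cc • f⟫_ℂ = 0 := by
      simp only [inner_sub_left, inner_sub_right, inner_smul_left, inner_smul_right]
      rw [inner_self_one hgn, inner_self_one hfn, hgfc, ← hccdef]
      linear_combination -hcc
    exact sub_eq_zero.mp (inner_self_eq_zero.mp hz)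
  have hαpos : 0 < α.re ∧ α.im = 0 := by
    have h := hfe
    rw [Complex.lt_def] at h
    simp only [Complex.zero_re, Complex.zero_im] at h
    exact ⟨h.1, h.2.symm⟩
  have hβpos : 0 < β.re ∧ β.im = 0 := by
    have h := hge
    rw [Complex.lt_def] at h
    simp only [Complex.zero_re, Complex.zero_im] at h
    exact ⟨h.1, h.2.symm⟩
  have hβα : β = (starRingEnd ℂ) cc * α := by
    rw [hβ, hgcf, inner_smul_left, ← hα]
  have hccim : cc.im = 0 := by
    have him := congrArg Complex.im hβα
    rw [Complex.mul_im] at him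
    simp only [Complex.conj_re, Complex.conj_im] at him
    rw [hαpos.2, hβpos.2] at him
    have : cc.im * α.re = 0 := by linear_combination him
    rcases mul_eq_zero.mp this with h | h
    · exact h
    · exact absurd h (ne_of_gt hαpos.1)
  have hccre : 0 < cc.re := by
    have hre := congrArg Complex.re hβα
    rw [Complex.mul_re] at hre
    simp only [Complex.conj_re, Complex.conj_im] at hre
    rw [hαpos.2] at hre
    have h' : β.re = cc.re * α.re := by rw [hre]; ring
    nlinarith [hαpos.1, hβpos.1, h']
  have hccsq : cc.re * cc.re = 1 := by
    have := congrArg Complex.re hcc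
    rw [Complex.mul_re] at this
    simp only [Complex.conj_re, Complex.conj_im, Complex.one_re] at this
    rw [hccim] at this
    linarith
  have hcc1 : cc = 1 := by
    have h0 : (cc.re - 1) * (cc.re + 1) = 0 := by linear_combination hccsq
    have hr : cc.re = 1 := by
      rcases mul_eq_zero.mp h0 with h | h
      · linarith
      · linarith
    apply Complex.ext
    · rw [hr, Complex.one_re]
    · rw [hccim, Complex.one_im]
  rw [hgcf, hcc1, one_smul]

end Antisym
section Main
variable {ι : Type*} [Fintype ι] [DecidableEq ι]

lemma mem_subUp {V : Matrix (ι × ι) (ι × ι) ℂ} {k η : EuclideanSpace ℂ ι} :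
    η ∈ subUp V k ↔ mact V (tens k η) = tens k η := by
  rw [subUp, LinearMap.mem_ker, LinearMap.sub_apply, LinearMap.comp_apply]
  constructor
  · intro h
    exact sub_eq_zero.mp h
  · intro h
    exact sub_eq_zero.mpr h

lemma mem_subDown {V : Matrix (ι × ι) (ι × ι) ℂ} {k η : EuclideanSpace ℂ ι} :
    η ∈ subDown V k ↔ mact V (tens η k) = tens η k := by
  rw [subDown, LinearMap.mem_ker, LinearMap.sub_apply, LinearMap.comp_apply]
  constructor
  · intro h
    exact sub_eq_zero.mp h
  · intro h
    exact sub_eq_zero.mpr h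

lemma unit_ne_zero {v : EuclideanSpace ℂ ι} (hv : ‖v‖ = 1) : v ≠ 0 := by
  intro h0
  rw [h0, norm_zero] at hv
  norm_num at hv

end Main

/-- the equivalent characterizations of `g ≺ f` and the fact that
`≺` is a partial order on pre-subgroups with greatest element `e` and least
element `ê`. -/
theorem presubgroup_order {ι : Type*} [Fintype ι] [DecidableEq ι] [Nonempty ι]
    (V : Matrix (ι × ι) (ι × ι) ℂ) (hV : IsMU V)
    (e eHat : EuclideanSpace ℂ ι) (hm : Mult1 V e eHat)
    (f g : EuclideanSpace ℂ ι) (hf : IsPreSubgroup V e f) (hg : IsPreSubgroup V e g) :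
    ((mact V (tens f g) = tens f g ↔ subUp V g ≤ subUp V f) ∧
     (mact V (tens f g) = tens f g ↔ subDown V f ≤ subDown V g)) ∧
    (∀ f', IsPreSubgroup V e f' → mact V (tens f' f') = tens f' f') ∧
    (∀ f' g' h', IsPreSubgroup V e f' → IsPreSubgroup V e g' → IsPreSubgroup V e h' →
      mact V (tens f' g') = tens f' g' → mact V (tens g' h') = tens g' h' →
      mact V (tens f' h') = tens f' h') ∧
    (∀ f' g', IsPreSubgroup V e f' → IsPreSubgroup V e g' →
      mact V (tens f' g') = tens f' g' → mact V (tens g' f') = tens g' f' → f' = g') ∧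
    (∀ f', IsPreSubgroup V e f' → mact V (tens e f') = tens e f') ∧
    (∀ f', IsPreSubgroup V e f' → mact V (tens f' eHat) = tens f' eHat) := by
  obtain ⟨hen, hhatn, hefix, hecofix, huniq, hcouniq⟩ := hm
  refine ⟨⟨⟨?_, ?_⟩, ⟨?_, ?_⟩⟩, ?_, ?_, ?_, ?_, ?_⟩
  · -- (i) → (ii)
    intro hfg η hη
    rw [mem_subUp] at hη ⊢
    exact core hV (unit_ne_zero hg.1) hfg hη
  · -- (ii) → (i)
    intro hsub
    have hgg : g ∈ subUp V g := mem_subUp.mpr hg.2.2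
    exact mem_subUp.mp (hsub hgg)
  · -- (i) → (iii)
    intro hfg η hη
    rw [mem_subDown] at hη ⊢
    exact core hV (unit_ne_zero hf.1) hη hfg
  · -- (iii) → (i)
    intro hsub
    have hff : f ∈ subDown V f := mem_subDown.mpr hf.2.2
    exact mem_subDown.mp (hsub hff)
  · -- reflexivity
    exact fun f' hf' => hf'.2.2
  · -- transitivity
    exact fun f' g' h' hf' hg' hh' h1 h2 => core hV (unit_ne_zero hg'.1) h1 h2
  · -- antisymmetry
    exact fun f' g' hf' hg' h1 h2 => antisym hV hen hefix huniq hf' hg' h1 h2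
  · -- e greatest
    exact fun f' _ => hefix f'
  · -- eHat least
    exact fun f' _ => hecofix f'

end MU
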